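/- (Theorem 4, O(1/t) convergence rate of the averaged trajectories, stated with the integral saddle inequalities as hypotheses.) Let (x*, λ̃*) be a saddle point of L̃ on Ω × (ℝ^M_+)^N. Let x : [0,∞) → Ω and λ : [0,∞) → (ℝ^M_+)^N be continuous, with λ bounded, and suppose that for every x̲ ∈ Ω, λ̲ ∈ (ℝ^M_+)^N, and t > 0: (1/2)‖x(t) − x̲‖² − (1/2)‖x(0) − x̲‖² ≤ ∫_0^t [L̃(x̲, λ(τ)) − L̃(x(τ), λ(τ))] dτ and (1/2)‖λ(t) − λ̲‖² − (1/2)‖λ(0) − λ̲‖² ≤ ∫_0^t [L̃(x(τ), λ(τ)) − L̃(x(τ), λ̲)] dτ. Define time averages x̂(t) = (1/t)∫_0^t x(τ) dτ and λ̂(t) = (1/t)∫_0^t λ(τ) dτ. Then there exists a constant θ₀ > 0 such that |L̃(x̂(t), λ̂(t)) − L̃(x*, λ̃*)| ≤ θ₀/t for all t > 0. -/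

import Mathlib

set_option linter.unusedSectionVars false
set_option maxHeartbeats 1000000

open scoped RealInnerProductSpace BigOperators

open MeasureTheory Set intervalIntegral

section Aux13
variable {E : Type*} [NormedAddCommGroup E] [NormedSpace ℝ E] [CompleteSpace E]

lemma aux_ii {u : ℝ → E} (h : ContinuousOn u (Set.Ici 0)) {t : ℝ} (ht : 0 ≤ t) :
    IntervalIntegrable u MeasureTheory.volume 0 t :=
  (h.mono (by rw [Set.uIcc_of_le ht]; exact Set.Icc_subset_Ici_self)).intervalIntegrable

lemma aux_avg {u : ℝ → E} {t : ℝ} (ht : 0 < t) :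
    ⨍ τ, u τ ∂(volume.restrict (Ioc (0:ℝ) t)) = (1/t) • ∫ τ in (0:ℝ)..t, u τ := by
  rw [average_eq, measureReal_def, Measure.restrict_apply_univ, Real.volume_Ioc,
    intervalIntegral.integral_of_le ht.le]
  norm_num [ENNReal.toReal_ofReal ht.le]

lemma aux_finite {t : ℝ} : IsFiniteMeasure (volume.restrict (Ioc (0:ℝ) t)) :=
  ⟨by rw [Measure.restrict_apply_univ, Real.volume_Ioc]; exact ENNReal.ofReal_lt_top⟩

lemma aux_nezero {t : ℝ} (ht : 0 < t) : NeZero (volume.restrict (Ioc (0:ℝ) t)) := by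
  refine ⟨fun h => ?_⟩
  have := congrArg (fun μ : Measure ℝ => μ univ) h
  simp [Measure.restrict_apply_univ, Real.volume_Ioc, ht.le, ht.ne'] at this
  exact absurd this ht.not_ge

lemma aux_avg_mem {s : Set E} (hs : Convex ℝ s) (hsc : IsClosed s)
    {u : ℝ → E} {t : ℝ} (ht : 0 < t)
    (hu : ContinuousOn u (Set.Ici 0)) (hmem : ∀ τ ∈ Set.Ici (0:ℝ), u τ ∈ s) :
    ((1/t) • ∫ τ in (0:ℝ)..t, u τ) ∈ s := by
  haveI := aux_finite (t := t); haveI := aux_nezero ht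
  rw [← aux_avg ht]
  refine hs.average_mem hsc ?_ ?_
  · exact (ae_restrict_mem measurableSet_Ioc).mono fun τ hτ => hmem τ hτ.1.le
  · exact ((hu.mono Icc_subset_Ici_self).integrableOn_compact isCompact_Icc).mono_set
      Ioc_subset_Icc_self

lemma aux_jensen {s : Set E} {F : E → ℝ} (hconv : ConvexOn ℝ s F)
    (hcont : ContinuousOn F s) (hsc : IsClosed s)
    {u : ℝ → E} {t : ℝ} (ht : 0 < t)
    (hu : ContinuousOn u (Set.Ici 0)) (hmem : ∀ τ ∈ Set.Ici (0:ℝ), u τ ∈ s) :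
    t * F ((1/t) • ∫ τ in (0:ℝ)..t, u τ) ≤ ∫ τ in (0:ℝ)..t, F (u τ) := by
  haveI := aux_finite (t := t); haveI := aux_nezero ht
  have hui : Integrable u (volume.restrict (Ioc (0:ℝ) t)) :=
    ((hu.mono Icc_subset_Ici_self).integrableOn_compact isCompact_Icc).mono_set
      Ioc_subset_Icc_self
  have hFu : ContinuousOn (fun τ => F (u τ)) (Set.Ici 0) :=
    hcont.comp hu fun τ hτ => hmem τ hτ
  have hFi : Integrable (F ∘ u) (volume.restrict (Ioc (0:ℝ) t)) :=
    ((hFu.mono Icc_subset_Ici_self).integrableOn_compact isCompact_Icc).mono_set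
      Ioc_subset_Icc_self
  have key := hconv.map_average_le hcont hsc
    ((ae_restrict_mem measurableSet_Ioc).mono fun τ hτ => hmem τ hτ.1.le) hui hFi
  rw [aux_avg ht, aux_avg ht (u := fun τ => F (u τ))] at key
  have h' := mul_le_mul_of_nonneg_left key ht.le
  rw [smul_eq_mul, ← mul_assoc] at h'
  calc t * F ((1/t) • ∫ τ in (0:ℝ)..t, u τ) ≤ t * (1/t) * ∫ τ in (0:ℝ)..t, F (u τ) := h'
    _ = ∫ τ in (0:ℝ)..t, F (u τ) := by field_simp

lemma aux_convexOn_sum {ι : Type*} (T : Finset ι) {s : Set E} (hs : Convex ℝ s)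
    {F : ι → E → ℝ} (h : ∀ i ∈ T, ConvexOn ℝ s (F i)) :
    ConvexOn ℝ s (fun z => ∑ i ∈ T, F i z) := by
  classical
  induction T using Finset.cons_induction with
  | empty => simpa using convexOn_const 0 hs
  | cons a T ha ih =>
    simp only [Finset.sum_cons]
    exact (h a (Finset.mem_cons_self a T)).add (ih fun i hi => h i (Finset.mem_cons_of_mem hi))

end Aux13

theorem stmt_13 (N M : ℕ) (hN : 0 < N) (n : Fin N → ℕ)
    (G : SimpleGraph (Fin N)) [DecidableRel G.Adj] (hG : G.Connected)
    (Ω U : ∀ i, Set (EuclideanSpace ℝ (Fin (n i))))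
    (f : ∀ i, EuclideanSpace ℝ (Fin (n i)) → ℝ)
    (g : ∀ i, EuclideanSpace ℝ (Fin (n i)) → EuclideanSpace ℝ (Fin M))
    (hΩcomp : ∀ i, IsCompact (Ω i)) (hΩconv : ∀ i, Convex ℝ (Ω i))
    (hΩne : ∀ i, (Ω i).Nonempty)
    (hUopen : ∀ i, IsOpen (U i)) (hΩU : ∀ i, Ω i ⊆ U i)
    (hf : ∀ i, StrictConvexOn ℝ (U i) (f i)) (hflip : ∀ i, LocallyLipschitzOn (U i) (f i))
    (hg : ∀ i k, ConvexOn ℝ (U i) fun z => g i z k)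
    (hglip : ∀ i, LocallyLipschitzOn (U i) (g i))
    (K : ℝ) (hK : 0 < K)
    (φ : (Fin N → EuclideanSpace ℝ (Fin M)) → ℝ)
    (hφ : ∀ lam, φ lam = (1 / 2) * ∑ i, ∑ j ∈ G.neighborFinset i, ∑ m, |lam i m - lam j m|)
    (Lt : (∀ i, EuclideanSpace ℝ (Fin (n i))) → (Fin N → EuclideanSpace ℝ (Fin M)) → ℝ)
    (hLt : ∀ x lam, Lt x lam = (∑ i, (f i (x i) + ⟪lam i, g i (x i)⟫)) - K * φ lam)
    -- the saddle point
    (xs : ∀ i, EuclideanSpace ℝ (Fin (n i))) (lams : Fin N → EuclideanSpace ℝ (Fin M))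
    (hxs : ∀ i, xs i ∈ Ω i) (hlams : ∀ i m, 0 ≤ lams i m)
    (hsaddle : ∀ x : ∀ i, EuclideanSpace ℝ (Fin (n i)), (∀ i, x i ∈ Ω i) →
      ∀ lam : Fin N → EuclideanSpace ℝ (Fin M), (∀ i m, 0 ≤ lam i m) →
        Lt xs lam ≤ Lt xs lams ∧ Lt xs lams ≤ Lt x lams)
    -- the trajectories
    (x : ℝ → ∀ i, EuclideanSpace ℝ (Fin (n i)))
    (lam : ℝ → Fin N → EuclideanSpace ℝ (Fin M))
    (hxcont : ContinuousOn x (Set.Ici (0 : ℝ)))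
    (hlamcont : ContinuousOn lam (Set.Ici (0 : ℝ)))
    (hxmem : ∀ t ≥ (0 : ℝ), ∀ i, x t i ∈ Ω i)
    (hlammem : ∀ t ≥ (0 : ℝ), ∀ i m, 0 ≤ lam t i m)
    (hlambdd : ∃ C : ℝ, ∀ t ≥ (0 : ℝ), ∀ i, ‖lam t i‖ ≤ C)
    -- the integral saddle inequalities
    (hineqx : ∀ xu : ∀ i, EuclideanSpace ℝ (Fin (n i)), (∀ i, xu i ∈ Ω i) →
      ∀ t > (0 : ℝ),
      (1 / 2) * (∑ i, ‖x t i - xu i‖ ^ 2) - (1 / 2) * (∑ i, ‖x 0 i - xu i‖ ^ 2) ≤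
        ∫ τ in (0 : ℝ)..t, (Lt xu (lam τ) - Lt (x τ) (lam τ)))
    (hineqlam : ∀ lamu : Fin N → EuclideanSpace ℝ (Fin M), (∀ i m, 0 ≤ lamu i m) →
      ∀ t > (0 : ℝ),
      (1 / 2) * (∑ i, ‖lam t i - lamu i‖ ^ 2) - (1 / 2) * (∑ i, ‖lam 0 i - lamu i‖ ^ 2) ≤
        ∫ τ in (0 : ℝ)..t, (Lt (x τ) (lam τ) - Lt (x τ) lamu))
    -- the time averages
    (xhat : ℝ → ∀ i, EuclideanSpace ℝ (Fin (n i)))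
    (lamhat : ℝ → Fin N → EuclideanSpace ℝ (Fin M))
    (hxhat : ∀ t > (0 : ℝ), ∀ i, xhat t i = (1 / t) • ∫ τ in (0 : ℝ)..t, x τ i)
    (hlamhat : ∀ t > (0 : ℝ), ∀ i, lamhat t i = (1 / t) • ∫ τ in (0 : ℝ)..t, lam τ i) :
    ∃ θ₀ > (0 : ℝ), ∀ t > (0 : ℝ),
      |Lt (xhat t) (lamhat t) - Lt xs lams| ≤ θ₀ / t := by
  classical
  obtain ⟨C0, hC0⟩ := hlambdd
  set CLam : ℝ := max C0 0 with hCLamdef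
  have hCLam0 : (0:ℝ) ≤ CLam := le_max_right _ _
  have hCl : ∀ t ≥ (0:ℝ), ∀ i, ‖lam t i‖ ≤ CLam := fun t htt i =>
    (hC0 t htt i).trans (le_max_left _ _)
  -- bound on Ω
  have hRex : ∀ i, ∃ R, ∀ z ∈ Ω i, ‖z‖ ≤ R := fun i =>
    isBounded_iff_forall_norm_le.mp (hΩcomp i).isBounded
  choose R hR using hRex
  have hR0 : ∀ i, 0 ≤ R i := fun i => by
    obtain ⟨z, hz⟩ := hΩne i; exact (norm_nonneg z).trans (hR i z hz)
  -- inner products as sums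
  have hinner : ∀ (a b : EuclideanSpace ℝ (Fin M)), ⟪a, b⟫ = ∑ m, a m * b m := fun a b => by
    simp [PiLp.inner_apply, RCLike.inner_apply, mul_comm]
  have hLt' : ∀ x' lam', Lt x' lam' =
      (∑ i, (f i (x' i) + ∑ m, lam' i m * g i (x' i) m)) - K * φ lam' := by
    intro x' lam'; rw [hLt]; simp only [hinner]
  have hφ' : φ = fun lam' => (1/2 : ℝ) * ∑ i, ∑ j ∈ G.neighborFinset i, ∑ m,
      |lam' i m - lam' j m| := funext hφ
  -- continuity
  have hfc : ∀ i, ContinuousOn (f i) (U i) := fun i => (hflip i).continuousOn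
  have hgc : ∀ i, ContinuousOn (g i) (U i) := fun i => (hglip i).continuousOn
  have hgm : ∀ i m, ContinuousOn (fun z => g i z m) (U i) := fun i m =>
    (EuclideanSpace.proj m).continuous.comp_continuousOn (hgc i)
  have hφc : Continuous φ := by
    rw [hφ']
    refine continuous_const.mul (continuous_finset_sum _ fun i _ =>
      continuous_finset_sum _ fun j _ => continuous_finset_sum _ fun m _ => ?_)
    exact (((EuclideanSpace.proj m).continuous.comp (continuous_apply i)).sub
      ((EuclideanSpace.proj m).continuous.comp (continuous_apply j))).abs
  have hxτ : ∀ i, ContinuousOn (fun τ => x τ i) (Set.Ici 0) := fun i =>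
    (continuous_apply i).comp_continuousOn hxcont
  have hlt : ∀ i, ContinuousOn (fun τ => lam τ i) (Set.Ici 0) := fun i =>
    (continuous_apply i).comp_continuousOn hlamcont
  have hltm : ∀ i m, ContinuousOn (fun τ => lam τ i m) (Set.Ici 0) := fun i m =>
    (EuclideanSpace.proj m).continuous.comp_continuousOn (hlt i)
  have hxU : ∀ (τ : ℝ), τ ∈ Set.Ici (0:ℝ) → ∀ i, x τ i ∈ U i := fun τ hτ i =>
    hΩU i (hxmem τ hτ i)
  have hfxτ : ∀ i, ContinuousOn (fun τ => f i (x τ i)) (Set.Ici 0) := fun i =>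
    (hfc i).comp (hxτ i) fun τ hτ => hxU τ hτ i
  have hgxτm : ∀ i m, ContinuousOn (fun τ => g i (x τ i) m) (Set.Ici 0) := fun i m =>
    (hgm i m).comp (hxτ i) fun τ hτ => hxU τ hτ i
  have hphl : ContinuousOn (fun τ => φ (lam τ)) (Set.Ici 0) := hφc.comp_continuousOn hlamcont
  -- continuity of the Lagrangian along trajectories
  have hLcont : ∀ (μ : ℝ → Fin N → EuclideanSpace ℝ (Fin M)), ContinuousOn μ (Set.Ici 0) →
      ContinuousOn (fun τ => Lt (x τ) (μ τ)) (Set.Ici 0) := by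
    intro μ hμ
    simp only [hLt']
    refine ContinuousOn.sub ?_ (continuousOn_const.mul (hφc.comp_continuousOn hμ))
    refine continuousOn_finset_sum _ fun i _ => (hfxτ i).add ?_
    refine continuousOn_finset_sum _ fun m _ => ContinuousOn.mul ?_ (hgxτm i m)
    exact (EuclideanSpace.proj m).continuous.comp_continuousOn
      ((continuous_apply i).comp_continuousOn hμ)
  have hLxc : ∀ c, ContinuousOn (fun τ => Lt (x τ) c) (Set.Ici 0) := fun c =>
    hLcont (fun _ => c) continuousOn_const
  have hLfix : ∀ (ξ : ∀ i, EuclideanSpace ℝ (Fin (n i))),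
      ContinuousOn (fun τ => Lt ξ (lam τ)) (Set.Ici 0) := by
    intro ξ
    simp only [hLt']
    refine ContinuousOn.sub ?_ (continuousOn_const.mul hphl)
    refine continuousOn_finset_sum _ fun i _ => continuousOn_const.add ?_
    exact continuousOn_finset_sum _ fun m _ => (hltm i m).mul continuousOn_const
  -- membership of the averages
  have hxhatmem : ∀ t > (0:ℝ), ∀ i, xhat t i ∈ Ω i := by
    intro t ht i
    rw [hxhat t ht i]
    exact aux_avg_mem (hΩconv i) (hΩcomp i).isClosed ht (hxτ i) (fun τ hτ => hxmem τ hτ i)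
  have hlamhat_comp : ∀ t > (0:ℝ), ∀ i m,
      lamhat t i m = (1/t) * ∫ τ in (0:ℝ)..t, lam τ i m := by
    intro t ht i m
    rw [hlamhat t ht i]
    have hcomm := (EuclideanSpace.proj m (𝕜 := ℝ)).intervalIntegral_comp_comm
      (aux_ii (hlt i) ht.le)
    have hcomm' : (∫ τ in (0:ℝ)..t, lam τ i m) = (∫ τ in (0:ℝ)..t, lam τ i) m := hcomm
    rw [PiLp.smul_apply, smul_eq_mul, ← hcomm']
  have hlamhatpos : ∀ t > (0:ℝ), ∀ i m, 0 ≤ lamhat t i m := by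
    intro t ht i m
    rw [hlamhat_comp t ht i m]
    have h0 : 0 ≤ ∫ τ in (0:ℝ)..t, lam τ i m :=
      intervalIntegral.integral_nonneg ht.le (fun τ hτ => hlammem τ hτ.1 i m)
    positivity
  have hlamhatnorm : ∀ t > (0:ℝ), ∀ i, ‖lamhat t i‖ ≤ CLam := by
    intro t ht i
    rw [hlamhat t ht i, norm_smul]
    have h1 : ‖∫ τ in (0:ℝ)..t, lam τ i‖ ≤ ∫ τ in (0:ℝ)..t, ‖lam τ i‖ :=
      intervalIntegral.norm_integral_le_integral_norm ht.le
    have h2 : (∫ τ in (0:ℝ)..t, ‖lam τ i‖) ≤ ∫ τ in (0:ℝ)..t, CLam :=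
      intervalIntegral.integral_mono_on ht.le (aux_ii ((hlt i).norm) ht.le)
        intervalIntegrable_const (fun τ hτ => hCl τ hτ.1 i)
    rw [intervalIntegral.integral_const, sub_zero, smul_eq_mul] at h2
    have hnn : ‖(1:ℝ)/t‖ = 1/t := by rw [Real.norm_eq_abs, abs_of_pos (by positivity)]
    rw [hnn]
    calc (1/t) * ‖∫ τ in (0:ℝ)..t, lam τ i‖ ≤ (1/t) * (t * CLam) :=
          mul_le_mul_of_nonneg_left (h1.trans h2) (by positivity)
      _ = CLam := by field_simp
  -- the constants
  set Cx : ℝ := (1/2) * ∑ i, ‖x 0 i - xs i‖^2 with hCxdef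
  set CLs : ℝ := (1/2) * ∑ i, ‖lam 0 i - lams i‖^2 with hCLsdef
  set Cb : ℝ := (1/2) * ∑ _i : Fin N, (2*CLam)^2 with hCbdef
  set CΩ : ℝ := (1/2) * ∑ i, (2*R i)^2 with hCΩdef
  have hCx0 : 0 ≤ Cx := by rw [hCxdef]; positivity
  have hCLs0 : 0 ≤ CLs := by rw [hCLsdef]; positivity
  have hCb0 : 0 ≤ Cb := by rw [hCbdef]; positivity
  have hCΩ0 : 0 ≤ CΩ := by rw [hCΩdef]; positivity
  refine ⟨max (Cx + Cb) (CΩ + CLs) + 1, ?_, ?_⟩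
  · have : (0:ℝ) ≤ max (Cx + Cb) (CΩ + CLs) :=
      le_max_of_le_left (by linarith)
    linarith
  intro t ht
  -- integrability
  have iiL : IntervalIntegrable (fun τ => Lt (x τ) (lam τ)) volume 0 t :=
    aux_ii (hLcont lam hlamcont) ht.le
  have iiLc : ∀ c, IntervalIntegrable (fun τ => Lt (x τ) c) volume 0 t := fun c =>
    aux_ii (hLxc c) ht.le
  have iiLfix : ∀ ξ, IntervalIntegrable (fun τ => Lt ξ (lam τ)) volume 0 t := fun ξ =>
    aux_ii (hLfix ξ) ht.le
  have iiF : ∀ (c : Fin N → EuclideanSpace ℝ (Fin M)) i, IntervalIntegrable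
      (fun τ => f i (x τ i) + ∑ m, c i m * g i (x τ i) m) volume 0 t := by
    intro c i
    refine aux_ii (ContinuousOn.add (hfxτ i) ?_) ht.le
    exact continuousOn_finset_sum _ fun m _ => continuousOn_const.mul (hgxτm i m)
  -- splitting ∫ Lt (x τ) c
  have hsplit : ∀ (c : Fin N → EuclideanSpace ℝ (Fin M)),
      (∫ τ in (0:ℝ)..t, Lt (x τ) c)
        = (∑ i, ∫ τ in (0:ℝ)..t, (f i (x τ i) + ∑ m, c i m * g i (x τ i) m))
            - t * (K * φ c) := by
    intro c
    have h1 : IntervalIntegrable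
        (fun τ => ∑ i, (f i (x τ i) + ∑ m, c i m * g i (x τ i) m)) volume 0 t := by
      refine aux_ii (continuousOn_finset_sum _ fun i _ => ContinuousOn.add (hfxτ i) ?_) ht.le
      exact continuousOn_finset_sum _ fun m _ => continuousOn_const.mul (hgxτm i m)
    calc (∫ τ in (0:ℝ)..t, Lt (x τ) c)
        = ∫ τ in (0:ℝ)..t, ((∑ i, (f i (x τ i) + ∑ m, c i m * g i (x τ i) m)) - K * φ c) := by
          simp only [hLt']
      _ = (∫ τ in (0:ℝ)..t, ∑ i, (f i (x τ i) + ∑ m, c i m * g i (x τ i) m))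
            - ∫ τ in (0:ℝ)..t, K * φ c :=
          intervalIntegral.integral_sub h1 intervalIntegrable_const
      _ = (∑ i, ∫ τ in (0:ℝ)..t, (f i (x τ i) + ∑ m, c i m * g i (x τ i) m))
            - t * (K * φ c) := by
          rw [intervalIntegral.integral_finset_sum (fun i _ => iiF c i),
            intervalIntegral.integral_const, sub_zero, smul_eq_mul]
  ----------------------------------------------------------------
  -- UPPER bound
  ----------------------------------------------------------------
  have hJ : t * Lt (xhat t) (lamhat t) ≤ ∫ τ in (0:ℝ)..t, Lt (x τ) (lamhat t) := by
    have key : ∀ i, t * (f i (xhat t i) + ∑ m, lamhat t i m * g i (xhat t i) m) ≤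
        ∫ τ in (0:ℝ)..t, (f i (x τ i) + ∑ m, lamhat t i m * g i (x τ i) m) := by
      intro i
      have hFconv : ConvexOn ℝ (Ω i) (fun z => f i z + ∑ m, lamhat t i m * g i z m) := by
        refine ((hf i).convexOn.subset (hΩU i) (hΩconv i)).add
          (aux_convexOn_sum _ (hΩconv i) fun m _ => ?_)
        have := ((hg i m).subset (hΩU i) (hΩconv i)).smul (hlamhatpos t ht i m)
        simpa [smul_eq_mul] using this
      have hFcont : ContinuousOn (fun z => f i z + ∑ m, lamhat t i m * g i z m) (Ω i) :=
        ((hfc i).mono (hΩU i)).add (continuousOn_finset_sum _ fun m _ =>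
          continuousOn_const.mul ((hgm i m).mono (hΩU i)))
      have := aux_jensen hFconv hFcont (hΩcomp i).isClosed ht (hxτ i)
        (fun τ hτ => hxmem τ hτ i)
      rwa [← hxhat t ht i] at this
    rw [hsplit (lamhat t), hLt' (xhat t) (lamhat t)]
    have hsum := Finset.sum_le_sum (fun i (_ : i ∈ Finset.univ) => key i)
    have hexp : t * ((∑ i, (f i (xhat t i) + ∑ m, lamhat t i m * g i (xhat t i) m))
        - K * φ (lamhat t))
        = (∑ i, t * (f i (xhat t i) + ∑ m, lamhat t i m * g i (xhat t i) m))
            - t * (K * φ (lamhat t)) := by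
      rw [mul_sub, Finset.mul_sum]
    rw [hexp]
    linarith
  have h2 : (∫ τ in (0:ℝ)..t, Lt (x τ) (lamhat t)) ≤
      (∫ τ in (0:ℝ)..t, Lt (x τ) (lam τ)) + Cb := by
    have h := hineqlam (lamhat t) (hlamhatpos t ht) t ht
    rw [intervalIntegral.integral_sub iiL (iiLc (lamhat t))] at h
    have hpos : (0:ℝ) ≤ (1/2) * ∑ i, ‖lam t i - lamhat t i‖^2 := by positivity
    have hbd : (1/2 : ℝ) * (∑ i, ‖lam 0 i - lamhat t i‖^2) ≤ Cb := by
      rw [hCbdef]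
      refine mul_le_mul_of_nonneg_left (Finset.sum_le_sum fun i _ => ?_) (by norm_num)
      have hb : ‖lam 0 i - lamhat t i‖ ≤ 2*CLam := (norm_sub_le _ _).trans
        (by linarith [hCl 0 le_rfl i, hlamhatnorm t ht i])
      exact pow_le_pow_left₀ (norm_nonneg _) hb 2
    linarith
  have h3 : (∫ τ in (0:ℝ)..t, Lt (x τ) (lam τ)) ≤
      (∫ τ in (0:ℝ)..t, Lt xs (lam τ)) + Cx := by
    have h := hineqx xs hxs t ht
    rw [intervalIntegral.integral_sub (iiLfix xs) iiL] at h
    have hpos : (0:ℝ) ≤ (1/2) * ∑ i, ‖x t i - xs i‖^2 := by positivity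
    rw [hCxdef]
    linarith
  have h4 : (∫ τ in (0:ℝ)..t, Lt xs (lam τ)) ≤ t * Lt xs lams := by
    have := intervalIntegral.integral_mono_on ht.le (iiLfix xs) intervalIntegrable_const
      (fun τ hτ => (hsaddle xs hxs (lam τ) (hlammem τ hτ.1)).1)
    rwa [intervalIntegral.integral_const, sub_zero, smul_eq_mul] at this
  have hup : t * Lt (xhat t) (lamhat t) ≤ t * Lt xs lams + (Cx + Cb) := by linarith
  ----------------------------------------------------------------
  -- LOWER bound
  ----------------------------------------------------------------
  -- Jensen for φ
  have hφJ : t * φ (lamhat t) ≤ ∫ τ in (0:ℝ)..t, φ (lam τ) := by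
    have habs : ∀ i j m, t * |lamhat t i m - lamhat t j m| ≤
        ∫ τ in (0:ℝ)..t, |lam τ i m - lam τ j m| := by
      intro i j m
      have hdif : lamhat t i m - lamhat t j m
          = (1/t) * ∫ τ in (0:ℝ)..t, (lam τ i m - lam τ j m) := by
        rw [hlamhat_comp t ht i m, hlamhat_comp t ht j m,
          intervalIntegral.integral_sub (aux_ii (hltm i m) ht.le) (aux_ii (hltm j m) ht.le)]
        ring
      rw [hdif, abs_mul, abs_of_pos (show (0:ℝ) < 1/t by positivity)]
      have habs2 := intervalIntegral.abs_integral_le_integral_abs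
        (f := fun τ => lam τ i m - lam τ j m) (μ := volume) (a := (0:ℝ)) (b := t) ht.le
      calc t * (1/t * |∫ τ in (0:ℝ)..t, (lam τ i m - lam τ j m)|)
          = |∫ τ in (0:ℝ)..t, (lam τ i m - lam τ j m)| := by field_simp
        _ ≤ ∫ τ in (0:ℝ)..t, |lam τ i m - lam τ j m| := habs2
    have hint1 : ∀ i j m, IntervalIntegrable (fun τ => |lam τ i m - lam τ j m|) volume 0 t :=
      fun i j m => aux_ii (((hltm i m).sub (hltm j m)).abs) ht.le
    have hint2 : ∀ i j, IntervalIntegrable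
        (fun τ => ∑ m, |lam τ i m - lam τ j m|) volume 0 t := fun i j =>
      aux_ii (continuousOn_finset_sum _ fun m _ => ((hltm i m).sub (hltm j m)).abs) ht.le
    have hint3 : ∀ i, IntervalIntegrable
        (fun τ => ∑ j ∈ G.neighborFinset i, ∑ m, |lam τ i m - lam τ j m|) volume 0 t := fun i =>
      aux_ii (continuousOn_finset_sum _ fun j _ =>
        continuousOn_finset_sum _ fun m _ => ((hltm i m).sub (hltm j m)).abs) ht.le
    have RHSeq : (∫ τ in (0:ℝ)..t, φ (lam τ))
        = (1/2 : ℝ) * ∑ i, ∑ j ∈ G.neighborFinset i, ∑ m,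
            ∫ τ in (0:ℝ)..t, |lam τ i m - lam τ j m| := by
      simp only [hφ']
      rw [intervalIntegral.integral_const_mul, intervalIntegral.integral_finset_sum
        (fun i _ => hint3 i)]
      congr 1
      refine Finset.sum_congr rfl fun i _ => ?_
      rw [intervalIntegral.integral_finset_sum (fun j _ => hint2 i j)]
      refine Finset.sum_congr rfl fun j _ => ?_
      rw [intervalIntegral.integral_finset_sum (fun m _ => hint1 i j m)]
    rw [RHSeq, hφ']
    have hLHS : t * ((1/2:ℝ) * ∑ i, ∑ j ∈ G.neighborFinset i, ∑ m,
        |lamhat t i m - lamhat t j m|)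
        = (1/2:ℝ) * ∑ i, ∑ j ∈ G.neighborFinset i, ∑ m,
            t * |lamhat t i m - lamhat t j m| := by
      simp only [← Finset.mul_sum]; ring
    rw [hLHS]
    refine mul_le_mul_of_nonneg_left ?_ (by norm_num)
    refine Finset.sum_le_sum fun i _ => Finset.sum_le_sum fun j _ =>
      Finset.sum_le_sum fun m _ => habs i j m
  have hintlam : ∀ i m, (∫ τ in (0:ℝ)..t, lam τ i m) = t * lamhat t i m := by
    intro i m
    rw [hlamhat_comp t ht i m]
    field_simp
  have hJ' : (∫ τ in (0:ℝ)..t, Lt (xhat t) (lam τ)) ≤ t * Lt (xhat t) (lamhat t) := by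
    have hiiS : IntervalIntegrable (fun τ => ∑ i, (f i (xhat t i) +
        ∑ m, lam τ i m * g i (xhat t i) m)) volume 0 t := by
      refine aux_ii (continuousOn_finset_sum _ fun i _ => continuousOn_const.add
        (continuousOn_finset_sum _ fun m _ => (hltm i m).mul continuousOn_const)) ht.le
    have hiiφ : IntervalIntegrable (fun τ => K * φ (lam τ)) volume 0 t :=
      aux_ii (continuousOn_const.mul hphl) ht.le
    have hiiFi : ∀ i, IntervalIntegrable (fun τ => f i (xhat t i) +
        ∑ m, lam τ i m * g i (xhat t i) m) volume 0 t := fun i =>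
      aux_ii (continuousOn_const.add
        (continuousOn_finset_sum _ fun m _ => (hltm i m).mul continuousOn_const)) ht.le
    have hiiFim : ∀ i m, IntervalIntegrable
        (fun τ => lam τ i m * g i (xhat t i) m) volume 0 t := fun i m =>
      aux_ii ((hltm i m).mul continuousOn_const) ht.le
    have hsplit2 : (∫ τ in (0:ℝ)..t, Lt (xhat t) (lam τ))
        = (∑ i, (t * f i (xhat t i) + ∑ m, (t * lamhat t i m) * g i (xhat t i) m))
            - K * ∫ τ in (0:ℝ)..t, φ (lam τ) := by
      simp only [hLt']
      rw [intervalIntegral.integral_sub hiiS hiiφ, intervalIntegral.integral_const_mul]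
      congr 1
      rw [intervalIntegral.integral_finset_sum (fun i _ => hiiFi i)]
      refine Finset.sum_congr rfl fun i _ => ?_
      have hiiSm : IntervalIntegrable (fun τ => ∑ m, lam τ i m * g i (xhat t i) m)
          volume 0 t :=
        aux_ii (continuousOn_finset_sum _ fun m _ => (hltm i m).mul continuousOn_const) ht.le
      rw [intervalIntegral.integral_add intervalIntegrable_const hiiSm,
        intervalIntegral.integral_const, sub_zero, smul_eq_mul,
        intervalIntegral.integral_finset_sum (fun m _ => hiiFim i m)]
      refine congrArg (t * f i (xhat t i) + ·) (Finset.sum_congr rfl fun m _ => ?_)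
      rw [intervalIntegral.integral_mul_const, hintlam i m]
    rw [hsplit2, hLt' (xhat t) (lamhat t)]
    have hexp : t * ((∑ i, (f i (xhat t i) + ∑ m, lamhat t i m * g i (xhat t i) m))
        - K * φ (lamhat t))
        = (∑ i, (t * f i (xhat t i) + ∑ m, (t * lamhat t i m) * g i (xhat t i) m))
            - t * (K * φ (lamhat t)) := by
      rw [mul_sub, Finset.mul_sum]
      refine sub_left_inj.mpr (Finset.sum_congr rfl fun i _ => ?_)
      rw [mul_add, Finset.mul_sum]
      exact congrArg (t * f i (xhat t i) + ·) (Finset.sum_congr rfl fun m _ => by ring)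
    rw [hexp]
    have hK' := mul_le_mul_of_nonneg_left hφJ hK.le
    linarith
  have h2' : (∫ τ in (0:ℝ)..t, Lt (x τ) (lam τ)) - CΩ ≤
      ∫ τ in (0:ℝ)..t, Lt (xhat t) (lam τ) := by
    have h := hineqx (xhat t) (hxhatmem t ht) t ht
    rw [intervalIntegral.integral_sub (iiLfix (xhat t)) iiL] at h
    have hpos : (0:ℝ) ≤ (1/2) * ∑ i, ‖x t i - xhat t i‖^2 := by positivity
    have hbd : (1/2 : ℝ) * (∑ i, ‖x 0 i - xhat t i‖^2) ≤ CΩ := by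
      rw [hCΩdef]
      refine mul_le_mul_of_nonneg_left (Finset.sum_le_sum fun i _ => ?_) (by norm_num)
      have hb : ‖x 0 i - xhat t i‖ ≤ 2*R i := (norm_sub_le _ _).trans
        (by linarith [hR i (x 0 i) (hxmem 0 le_rfl i), hR i (xhat t i) (hxhatmem t ht i)])
      exact pow_le_pow_left₀ (norm_nonneg _) hb 2
    linarith
  have h3' : (∫ τ in (0:ℝ)..t, Lt (x τ) lams) - CLs ≤
      ∫ τ in (0:ℝ)..t, Lt (x τ) (lam τ) := by
    have h := hineqlam lams hlams t ht
    rw [intervalIntegral.integral_sub iiL (iiLc lams)] at h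
    have hpos : (0:ℝ) ≤ (1/2) * ∑ i, ‖lam t i - lams i‖^2 := by positivity
    rw [hCLsdef]
    linarith
  have h4' : t * Lt xs lams ≤ ∫ τ in (0:ℝ)..t, Lt (x τ) lams := by
    have := intervalIntegral.integral_mono_on ht.le intervalIntegrable_const (iiLc lams)
      (fun τ hτ => (hsaddle (x τ) (hxmem τ hτ.1) lams hlams).2)
    rwa [intervalIntegral.integral_const, sub_zero, smul_eq_mul] at this
  have hlow : t * Lt xs lams - (CΩ + CLs) ≤ t * Lt (xhat t) (lamhat t) := by linarith
  ----------------------------------------------------------------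
  -- conclusion
  ----------------------------------------------------------------
  set θ₀ : ℝ := max (Cx + Cb) (CΩ + CLs) + 1 with hθ₀
  have hm1 : Cx + Cb ≤ θ₀ := by
    have := le_max_left (Cx + Cb) (CΩ + CLs); rw [hθ₀]; linarith
  have hm2 : CΩ + CLs ≤ θ₀ := by
    have := le_max_right (Cx + Cb) (CΩ + CLs); rw [hθ₀]; linarith
  rw [abs_le]
  constructor
  · have hS : Lt xs lams - Lt (xhat t) (lamhat t) ≤ θ₀ / t := by
      rw [le_div_iff₀ ht]
      nlinarith
    linarith
  · rw [← sub_le_iff_le_add'] at hup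
    rw [le_div_iff₀ ht]
    nlinarith
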